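/- In the two-user routing game on the load-balancing network, if additionally 0 < 4δ < r, c ≥ 4L and c < (r − 4δ)L/δ, then the selfish user 2 also strictly benefits from user 1's unilateral altruism: his cost at the altruistic equilibrium profile (r, r − δ) is strictly smaller than his cost at the selfish Nash equilibrium, i.e., J₂(r, r − δ) = δ(c + 2L) < rL + (r/2 − ζ)c = J₂(r/2 + ζ, r/2 + ζ), where ζ = cδ/(2L). -/

import Mathlib

/-- Elbow latency function with parameters `r, L, δ`. -/
noncomputable def T (r L δ x : ℝ) : ℝ := max 0 (L / δ * (x - r) + L)

/-- Cost of user 1 in the two-user load-balancing game. -/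
noncomputable def J₁ (r L δ c x₁ x₂ : ℝ) : ℝ :=
  x₁ * T r L δ (x₁ + (r - x₂)) + (r - x₁) * (c + T r L δ (x₂ + (r - x₁)))

/-- Cost of user 2 in the two-user load-balancing game. -/
noncomputable def J₂ (r L δ c x₁ x₂ : ℝ) : ℝ :=
  x₂ * T r L δ (x₂ + (r - x₁)) + (r - x₂) * (c + T r L δ (x₁ + (r - x₂)))

theorem selfish_user_benefits_from_altruism
    (r L δ c : ℝ) (hδ : 0 < δ) (hδL : δ < L) (hLc : L < c) (hcδ : c * δ < r * L)
    (hr : 4 * δ < r) (hc₁ : 4 * L ≤ c) (hc₂ : c < (r - 4 * δ) * L / δ)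
    (ζ : ℝ) (hζ : ζ = c * δ / (2 * L)) :
    J₂ r L δ c r (r - δ) = δ * (c + 2 * L) ∧
    δ * (c + 2 * L) < r * L + (r / 2 - ζ) * c ∧
    J₂ r L δ c (r / 2 + ζ) (r / 2 + ζ) = r * L + (r / 2 - ζ) * c := by
  have hδ' : δ ≠ 0 := ne_of_gt hδ
  have hL : 0 < L := hδ.trans hδL
  have hc2' : c * δ < (r - 4 * δ) * L := by
    rw [div_eq_mul_inv] at hc₂
    calc c * δ < (r - 4 * δ) * L * δ⁻¹ * δ := by
          exact mul_lt_mul_of_pos_right hc₂ hδ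
      _ = (r - 4 * δ) * L := by field_simp
  refine ⟨?_, ?_, ?_⟩
  · unfold J₂ T
    have h1 : r - δ + (r - r) = r - δ := by ring
    have h2 : r + (r - (r - δ)) = r + δ := by ring
    rw [h1, h2]
    have e1 : L / δ * (r - δ - r) + L = 0 := by field_simp; ring
    have e2 : L / δ * (r + δ - r) + L = 2 * L := by field_simp; ring
    rw [e1, e2, max_self, max_eq_right (by linarith)]
    ring
  · have : 0 < 2 * L := by linarith
    rw [hζ, show r * L + (r / 2 - c * δ / (2 * L)) * c
        = (2 * r * L * L + r * c * L - c * c * δ) / (2 * L) by field_simp; ring,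
      lt_div_iff₀ this]
    have hc : 0 < c := hL.trans hLc
    nlinarith [mul_pos hδ hL, mul_pos hδ hc,
      mul_lt_mul_of_pos_right hc2' hc, mul_lt_mul_of_pos_right hc2' hL]
  · unfold J₂ T
    have h1 : r / 2 + ζ + (r - (r / 2 + ζ)) = r := by ring
    rw [h1]
    have e1 : L / δ * (r - r) + L = L := by ring
    rw [e1, max_eq_right hL.le]
    ring
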